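/- For any function x : Fin p → Fin p, and any n ≥ p - 1, the iterate x^n equals x^(n + lcm(1,...,p)), where lcm(1,...,p) denotes the least common multiple of the integers 1 through p. -/
import Mathlib

theorem iterate_eq_add_lcm (p : ℕ) (hp : 0 < p) (x : Fin p → Fin p) (n : ℕ)
    (hn : p - 1 ≤ n) :
    x^[n] = x^[n + Finset.lcm (Finset.Icc 1 p) id] := by
  funext a
  have key : ∃ i j : ℕ, i < j ∧ j ≤ p ∧ x^[i] a = x^[j] a := by
    obtain ⟨k, l, h1, h2⟩ := Fintype.exists_ne_map_eq_of_card_lt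
      (fun k : Fin (p+1) => x^[(k:ℕ)] a) (by simp)
    rcases lt_or_gt_of_ne (fun h => h1 (Fin.ext h) : (k:ℕ) ≠ l) with hlt | hlt
    · exact ⟨k, l, hlt, Nat.lt_succ_iff.mp l.isLt, h2⟩
    · exact ⟨l, k, hlt, Nat.lt_succ_iff.mp k.isLt, h2.symm⟩
  obtain ⟨i, j, hij, hjp, heq⟩ := key
  set c := j - i with hc
  have hstep : ∀ m, i ≤ m → x^[m + c] a = x^[m] a := by
    intro m hm
    have h1 : m + c = (m - i) + j := by omega
    have h2 : m = (m - i) + i := by omega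
    rw [h1, Function.iterate_add_apply, ← heq, ← Function.iterate_add_apply, ← h2]
  have hmul : ∀ k, x^[n + k * c] a = x^[n] a := by
    intro k
    induction k with
    | zero => simp
    | succ k ih =>
      have h3 : n + (k+1) * c = (n + k * c) + c := by ring
      rw [h3, hstep _ (by omega), ih]
  have hdvd : c ∣ Finset.lcm (Finset.Icc 1 p) id := by
    have hm : c ∈ Finset.Icc 1 p := Finset.mem_Icc.mpr ⟨by omega, by omega⟩
    exact Finset.dvd_lcm hm
  obtain ⟨k, hk⟩ := hdvd
  rw [hk, mul_comm, hmul]
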